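/- (Theorem 6.31: the trace class is the closure of the block-finite operators.) Call T : H →L[K] H block-finite (with respect to the standard basis) if there exists k : ℕ such that (T (e n)) m = 0 whenever max m n > k. Then the set of trace class operators {T : H →L[K] H | Tendsto (fun q : ℕ × ℕ => (T (e q.2)) q.1) Filter.cofinite (nhds 0)} equals the closure, in the operator-norm topology of H →L[K] H, of the set of block-finite operators {T : H →L[K] H | ∃ k : ℕ, ∀ m n : ℕ, k < max m n → (T (e n)) m = 0}. -/

import Mathlib

open Filter

noncomputable section

variable (K : Type*) [NontriviallyNormedField K] [IsUltrametricDist K]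
  [CompleteSpace K] [StarRing K] [NormedStarGroup K]

/-- The p-adic coordinate Hilbert space: zero-convergent sequences in `K` with sup norm. -/
abbrev H := ZeroAtInftyContinuousMap ℕ K

/-- The standard basis vectors of `H K`. -/
def e (n : ℕ) : H K where
  toFun := fun m => if m = n then 1 else 0
  continuous_toFun := continuous_of_discreteTopology
  zero_at_infty' := by
    rw [cocompact_eq_atTop]
    refine Filter.Tendsto.congr' ?_ tendsto_const_nhds
    filter_upwards [Filter.eventually_gt_atTop n] with m hm
    simp [Nat.ne_of_gt hm]

/-- The canonical inner product on `H K`: `⟪x, y⟫ = ∑' i, star (x i) * y i`. -/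
def inner' (x y : H K) : K := ∑' i, star (x i) * y i

/-- A bounded operator is of trace class if its matrix entries vanish along the
cofinite filter of `ℕ × ℕ`. -/
def IsTraceClass (T : H K →L[K] H K) : Prop :=
  Tendsto (fun q : ℕ × ℕ => (T (e K q.2)) q.1) Filter.cofinite (nhds 0)

namespace Stmt17Aux

variable {K}

lemma normH_le (x : H K) {C : ℝ} (hC : 0 ≤ C) (h : ∀ m, ‖x m‖ ≤ C) : ‖x‖ ≤ C := by
  rw [← ZeroAtInftyContinuousMap.norm_toBCF_eq_norm]
  exact (BoundedContinuousFunction.norm_le hC).mpr h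

lemma coord_le (x : H K) (m : ℕ) : ‖x m‖ ≤ ‖x‖ := by
  rw [← ZeroAtInftyContinuousMap.norm_toBCF_eq_norm]
  exact BoundedContinuousFunction.norm_coe_le_norm x.toBCF m

lemma e_apply (n m : ℕ) : (e K n) m = if m = n then 1 else 0 := rfl

lemma norm_e_le (n : ℕ) : ‖e K n‖ ≤ 1 := by
  refine normH_le _ zero_le_one fun m => ?_
  rw [e_apply]
  split <;> simp

lemma entry_le (T : H K →L[K] H K) (m n : ℕ) : ‖(T (e K n)) m‖ ≤ ‖T‖ := by
  calc ‖(T (e K n)) m‖ ≤ ‖T (e K n)‖ := coord_le _ _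
    _ ≤ ‖T‖ * ‖e K n‖ := T.le_opNorm _
    _ ≤ ‖T‖ * 1 := mul_le_mul_of_nonneg_left (norm_e_le n) (norm_nonneg T)
    _ = ‖T‖ := mul_one _

/-- The truncation of a zero-at-infinity sequence. -/
def Pz (k : ℕ) (x : H K) : H K where
  toFun := fun m => if m ≤ k then x m else 0
  continuous_toFun := continuous_of_discreteTopology
  zero_at_infty' := by
    rw [cocompact_eq_atTop]
    refine Filter.Tendsto.congr' ?_ tendsto_const_nhds
    filter_upwards [Filter.eventually_gt_atTop k] with m hm
    simp [Nat.not_le.mpr hm]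

lemma Pz_apply (k : ℕ) (x : H K) (m : ℕ) : Pz k x m = if m ≤ k then x m else 0 := rfl

variable (K) in
/-- Truncation as a continuous linear map. -/
def P (k : ℕ) : H K →L[K] H K :=
  LinearMap.mkContinuous
    { toFun := Pz k
      map_add' := fun x y => by
        ext m
        simp only [Pz_apply, ZeroAtInftyContinuousMap.coe_add, Pi.add_apply]
        split <;> simp
      map_smul' := fun c x => by
        ext m
        simp only [Pz_apply, ZeroAtInftyContinuousMap.coe_smul, Pi.smul_apply, smul_eq_mul,
          RingHom.id_apply]
        split <;> simp }
    1 (fun x => by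
      rw [one_mul]
      refine normH_le _ (norm_nonneg x) fun m => ?_
      show ‖Pz k x m‖ ≤ ‖x‖
      rw [Pz_apply]
      split
      · exact coord_le x m
      · simp)

lemma P_apply (k : ℕ) (x : H K) (m : ℕ) : (P K k x) m = if m ≤ k then x m else 0 := rfl

/-- Evaluation at a point as an additive monoid homomorphism. -/
def evalHom (m : ℕ) : H K →+ K :=
  AddMonoidHom.mk' (fun x => x m) (fun x y => by
    show (x + y) m = x m + y m
    rw [ZeroAtInftyContinuousMap.coe_add]; rfl)

lemma evalHom_apply (m : ℕ) (x : H K) : evalHom m x = x m := rfl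

lemma P_eq_sum (k : ℕ) (x : H K) :
    P K k x = ∑ n ∈ Finset.range (k + 1), x n • e K n := by
  ext m
  rw [show (∑ n ∈ Finset.range (k + 1), x n • e K n) m
      = ∑ n ∈ Finset.range (k + 1), (x n • e K n) m from map_sum (evalHom m) _ _]
  simp only [ZeroAtInftyContinuousMap.coe_smul, Pi.smul_apply, smul_eq_mul, e_apply,
    mul_ite, mul_one, mul_zero, P_apply]
  rw [Finset.sum_ite_eq (Finset.range (k + 1)) m (fun n => x n)]
  simp [Nat.lt_succ_iff]

lemma opnorm_aux (R : H K →L[K] H K) {C : ℝ} (hC : 0 ≤ C)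
    (h : ∀ m n : ℕ, ‖(R (e K n)) m‖ ≤ C) (x : H K) : ‖R x‖ ≤ C * ‖x‖ := by
  have hP : ∀ k : ℕ, ‖R (P K k x)‖ ≤ C * ‖x‖ := by
    intro k
    rw [P_eq_sum, map_sum]
    refine normH_le _ (mul_nonneg hC (norm_nonneg x)) fun m => ?_
    rw [show (∑ n ∈ Finset.range (k + 1), R (x n • e K n)) m
        = ∑ n ∈ Finset.range (k + 1), (R (x n • e K n)) m from map_sum (evalHom m) _ _]
    refine IsUltrametricDist.norm_sum_le_of_forall_le_of_nonneg
      (mul_nonneg hC (norm_nonneg x)) fun n _ => ?_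
    rw [map_smul]
    simp only [ZeroAtInftyContinuousMap.coe_smul, Pi.smul_apply, smul_eq_mul, norm_mul]
    calc ‖x n‖ * ‖(R (e K n)) m‖ ≤ ‖x‖ * C :=
          mul_le_mul (coord_le x n) (h m n) (norm_nonneg _) (norm_nonneg x)
      _ = C * ‖x‖ := mul_comm _ _
  refine le_of_forall_pos_le_add fun ε hε => ?_
  set δ : ℝ := ε / (‖R‖ + 1) with hδdef
  have hRpos : (0 : ℝ) < ‖R‖ + 1 := by positivity
  have hδ : 0 < δ := div_pos hε hRpos
  -- choose k with the tail of x smaller than δ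
  have hx : Tendsto (⇑x) atTop (nhds 0) := by
    have := x.zero_at_infty'
    rwa [cocompact_eq_atTop] at this
  obtain ⟨N, hN⟩ := (Metric.tendsto_atTop.mp hx) δ hδ
  have htail : ‖x - P K N x‖ ≤ δ := by
    refine normH_le _ hδ.le fun m => ?_
    rw [show (x - P K N x) m = x m - (P K N x) m from by
      rw [ZeroAtInftyContinuousMap.coe_sub]; rfl]
    rw [P_apply]
    split
    · simpa using hδ.le
    · rename_i hm
      rw [sub_zero]
      have := hN m (le_of_lt (Nat.lt_of_not_le hm))
      rw [dist_zero_right] at this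
      exact this.le
  have hsplit : R x = R (P K N x) + R (x - P K N x) := by
    rw [← map_add]
    congr 1
    abel
  calc ‖R x‖ ≤ ‖R (P K N x)‖ + ‖R (x - P K N x)‖ := by
        rw [hsplit]; exact norm_add_le _ _
    _ ≤ C * ‖x‖ + ‖R‖ * δ := by
        refine add_le_add (hP N) ?_
        calc ‖R (x - P K N x)‖ ≤ ‖R‖ * ‖x - P K N x‖ := R.le_opNorm _
          _ ≤ ‖R‖ * δ := mul_le_mul_of_nonneg_left htail (norm_nonneg R)
    _ ≤ C * ‖x‖ + ε := by
        refine add_le_add le_rfl ?_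
        calc ‖R‖ * δ ≤ (‖R‖ + 1) * δ := by nlinarith [norm_nonneg R]
          _ = ε := by rw [hδdef]; field_simp

lemma P_e (k n : ℕ) : P K k (e K n) = if n ≤ k then e K n else 0 := by
  ext m
  by_cases hmn : m = n
  · subst hmn
    split <;> simp [P_apply, e_apply, *]
  · split <;> simp [P_apply, e_apply, hmn]

end Stmt17Aux

open Stmt17Aux in
/-- The trace class is the operator-norm closure of the block-finite operators. -/
theorem stmt17 :
    {T : H K →L[K] H K |
        Tendsto (fun q : ℕ × ℕ => (T (e K q.2)) q.1) Filter.cofinite (nhds 0)} =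
      closure {T : H K →L[K] H K |
        ∃ k : ℕ, ∀ m n : ℕ, k < max m n → (T (e K n)) m = 0} := by
  apply Set.eq_of_subset_of_subset
  · -- trace class ⊆ closure of block-finite
    intro T hT
    rw [Set.mem_setOf_eq] at hT
    have hclos : (∀ ε > 0, ∃ S ∈ {T : H K →L[K] H K |
        ∃ k : ℕ, ∀ m n : ℕ, k < max m n → (T (e K n)) m = 0}, dist T S < ε) →
        T ∈ closure {T : H K →L[K] H K |
        ∃ k : ℕ, ∀ m n : ℕ, k < max m n → (T (e K n)) m = 0} :=
      fun h => Metric.mem_closure_iff.mpr h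
    apply hclos
    intro ε hε
    have h2 : (0 : ℝ) < ε / 2 := by positivity
    have hfin : {q : ℕ × ℕ | ¬ ‖(T (e K q.2)) q.1‖ < ε / 2}.Finite := by
      have hev := Metric.tendsto_nhds.mp hT (ε / 2) h2
      rw [Filter.eventually_cofinite] at hev
      simpa [dist_zero_right] using hev
    set F := hfin.toFinset with hF
    set k : ℕ := F.sup (fun q => max q.1 q.2) with hk
    have hsmall : ∀ m n : ℕ, k < max m n → ‖(T (e K n)) m‖ < ε / 2 := by
      intro m n hmn
      by_contra hc
      have hmem : (m, n) ∈ F := hfin.mem_toFinset.mpr (by simpa using hc)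
      have hle : max m n ≤ k := by
        simpa [hk] using Finset.le_sup (f := fun q : ℕ × ℕ => max q.1 q.2) hmem
      omega
    refine ⟨(P K k).comp (T.comp (P K k)), ⟨k, fun m n hmn => ?_⟩, ?_⟩
    · -- block-finite
      simp only [ContinuousLinearMap.comp_apply]
      rcases Nat.lt_or_ge k n with hn | hn
      · rw [P_e, if_neg (by omega)]
        simp
      · rw [P_apply, if_neg (by omega)]
    · -- distance bound
      have hd : dist T ((P K k).comp (T.comp (P K k)))
          = ‖T - (P K k).comp (T.comp (P K k))‖ := dist_eq_norm T ((P K k).comp (T.comp (P K k)))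
      rw [hd]
      have hentries : ∀ m n : ℕ,
          ‖((T - (P K k).comp (T.comp (P K k))) (e K n)) m‖ ≤ ε / 2 := by
        intro m n
        rw [ContinuousLinearMap.sub_apply, ContinuousLinearMap.comp_apply,
          ContinuousLinearMap.comp_apply]
        rcases Nat.lt_or_ge k (max m n) with hmn | hmn
        · -- outside the block: the truncated entry is 0
          have h0 : (P K k (T (P K k (e K n)))) m = 0 := by
            rcases Nat.lt_or_ge k n with hn | hn
            · rw [P_e, if_neg (by omega)]
              simp
            · rw [P_apply, if_neg (by omega)]
          rw [show ((T (e K n) - P K k (T (P K k (e K n)))) m)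
              = (T (e K n)) m - (P K k (T (P K k (e K n)))) m from by
            rw [ZeroAtInftyContinuousMap.coe_sub]; rfl]
          rw [h0, sub_zero]
          exact (hsmall m n hmn).le
        · -- inside the block: entries agree
          have hn : n ≤ k := le_trans (le_max_right m n) hmn
          have hm : m ≤ k := le_trans (le_max_left m n) hmn
          rw [P_e, if_pos hn]
          rw [show ((T (e K n) - P K k (T (e K n))) m)
              = (T (e K n)) m - (P K k (T (e K n))) m from by
            rw [ZeroAtInftyContinuousMap.coe_sub]; rfl]
          rw [P_apply, if_pos hm, sub_self, norm_zero]
          exact h2.le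
      have hop : ‖T - (P K k).comp (T.comp (P K k))‖ ≤ ε / 2 :=
        ContinuousLinearMap.opNorm_le_bound _ h2.le (opnorm_aux _ h2.le hentries)
      linarith
  · -- closure of block-finite ⊆ trace class
    intro T hT
    rw [Set.mem_setOf_eq, Metric.tendsto_nhds]
    intro ε hε
    rw [Filter.eventually_cofinite]
    have hT' : ∀ δ > 0, ∃ S ∈ {T : H K →L[K] H K |
        ∃ k : ℕ, ∀ m n : ℕ, k < max m n → (T (e K n)) m = 0}, dist T S < δ :=
      Metric.mem_closure_iff.mp hT
    obtain ⟨S, hS, hdist⟩ := hT' ε hε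
    obtain ⟨k, hk⟩ := hS
    refine Set.Finite.subset ((Set.finite_Icc 0 k).prod (Set.finite_Icc 0 k)) ?_
    intro q hq
    simp only [Set.mem_prod, Set.mem_Icc] at *
    by_contra hc
    apply hq
    have hmax : k < max q.1 q.2 := by omega
    have h0 : (S (e K q.2)) q.1 = 0 := hk q.1 q.2 hmax
    have : (T (e K q.2)) q.1 = ((T - S) (e K q.2)) q.1 := by
      rw [ContinuousLinearMap.sub_apply,
        show ((T (e K q.2) - S (e K q.2)) q.1)
          = (T (e K q.2)) q.1 - (S (e K q.2)) q.1 from by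
          rw [ZeroAtInftyContinuousMap.coe_sub]; rfl, h0, sub_zero]
    rw [dist_zero_right, this]
    calc ‖((T - S) (e K q.2)) q.1‖ ≤ ‖T - S‖ := entry_le _ _ _
      _ < ε := by
          have hd : dist T S = ‖T - S‖ := dist_eq_norm T S
          rwa [hd] at hdist
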